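/- (Interval Newton, nonexistence test) Let a < b and let f : ℝ → ℝ be continuously differentiable on [a,b]. Suppose there are real numbers m ≤ M with 0 ∉ [m, M] and f′(x) ∈ [m, M] for all x ∈ [a,b]. Let x₀ ∈ [a,b] and define N(x₀, [a,b]) = { x₀ − f(x₀)/d : d ∈ [m, M] }. If N(x₀, [a,b]) ∩ [a,b] = ∅, then f(x) ≠ 0 for all x ∈ [a,b]. -/

import Mathlib

/-- Interval Newton method (Moore), part 4: nonexistence test. If the interval Newton
operator `N(x₀,[a,b]) = {x₀ - f(x₀)/d : d ∈ [m,M]}` is disjoint from `[a,b]`, then `f`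
has no zero in `[a,b]`. -/
theorem interval_newton_no_zero (a b : ℝ) (hab : a < b) (f f' : ℝ → ℝ)
    (hderiv : ∀ x ∈ Set.Icc a b, HasDerivWithinAt f (f' x) (Set.Icc a b) x)
    (hcont : ContinuousOn f' (Set.Icc a b))
    (m M : ℝ) (hmM : m ≤ M) (h0 : (0 : ℝ) ∉ Set.Icc m M)
    (hbound : ∀ x ∈ Set.Icc a b, f' x ∈ Set.Icc m M)
    (x₀ : ℝ) (hx₀ : x₀ ∈ Set.Icc a b)
    (hN : {x : ℝ | ∃ d ∈ Set.Icc m M, x = x₀ - f x₀ / d} ∩ Set.Icc a b = ∅) :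
    ∀ x ∈ Set.Icc a b, f x ≠ 0 := by
  intro x hx hfx
  have hne : ∀ d ∈ Set.Icc m M, d ≠ 0 := fun d hd h => h0 (h ▸ hd)
  have hmem : ∀ d ∈ Set.Icc m M, x₀ - f x₀ / d ∉ Set.Icc a b := by
    intro d hd hc
    have : (x₀ - f x₀ / d) ∈ ({x : ℝ | ∃ d ∈ Set.Icc m M, x = x₀ - f x₀ / d} ∩ Set.Icc a b) :=
      ⟨⟨d, hd, rfl⟩, hc⟩
    rw [hN] at this
    exact this
  have hfc : ContinuousOn f (Set.Icc a b) := fun y hy => (hderiv y hy).continuousWithinAt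
  have hfx₀ : f x₀ ≠ 0 := by
    intro h
    refine hmem m ⟨le_refl m, hmM⟩ ?_
    rw [h]
    simpa using hx₀
  rcases lt_trichotomy x x₀ with hlt | heq | hgt
  · have hsub : Set.Icc x x₀ ⊆ Set.Icc a b := Set.Icc_subset_Icc hx.1 hx₀.2
    have hsub' : Set.Ioo x x₀ ⊆ Set.Icc a b := fun y hy => hsub (Set.Ioo_subset_Icc_self hy)
    obtain ⟨c, hc, hceq⟩ := exists_hasDerivAt_eq_slope f f' hlt (hfc.mono hsub)
      (fun y hy => (hderiv y (hsub' hy)).hasDerivAt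
        (Icc_mem_nhds (lt_of_le_of_lt hx.1 hy.1) (lt_of_lt_of_le hy.2 hx₀.2)))
    have hd := hbound c (hsub' hc)
    have hdne := hne _ hd
    refine hmem (f' c) hd ?_
    have hne' : x₀ - x ≠ 0 := sub_ne_zero.mpr hlt.ne'
    have : x₀ - f x₀ / f' c = x := by
      rw [hceq, hfx]
      field_simp
      ring
    rw [this]; exact hx
  · exact hfx₀ (heq ▸ hfx)
  · have hsub : Set.Icc x₀ x ⊆ Set.Icc a b := Set.Icc_subset_Icc hx₀.1 hx.2
    have hsub' : Set.Ioo x₀ x ⊆ Set.Icc a b := fun y hy => hsub (Set.Ioo_subset_Icc_self hy)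
    obtain ⟨c, hc, hceq⟩ := exists_hasDerivAt_eq_slope f f' hgt (hfc.mono hsub)
      (fun y hy => (hderiv y (hsub' hy)).hasDerivAt
        (Icc_mem_nhds (lt_of_le_of_lt hx₀.1 hy.1) (lt_of_lt_of_le hy.2 hx.2)))
    have hd := hbound c (hsub' hc)
    have hdne := hne _ hd
    refine hmem (f' c) hd ?_
    have hne' : x - x₀ ≠ 0 := sub_ne_zero.mpr hgt.ne'
    have : x₀ - f x₀ / f' c = x := by
      rw [hceq, hfx]
      field_simp [hfx₀]
      ring
    rw [this]; exact hx
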